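/- Foster's theorem for an embedded chain: Let S be a countable set, P a transition matrix on S, and τ : S → ℕ a function taking finitely many values, all positive integers, with τ(i) ≤ T_max for all i. Define the random times t_0 = 0, t_{n+1} = t_n + τ(Z_{t_n}), and the embedded chain Z̃_n = Z_{t_n}. Suppose there exist ε > 0, a finite subset V ⊆ S and a function f : S → ℝ bounded below such that (i) E(f(Z̃_{n+1}) − f(Z̃_n) | Z̃_n = i) ≤ −ε for every i ∈ S \ V, and (ii) E(f(Z̃_{n+1}) | Z̃_n = i) < ∞ for every i ∈ V. Then for every initial state i ∈ S, the expected first hitting time E_i[τ_V] of the set V by the original Markov chain (Z_n) is finite. -/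

import Mathlib

open scoped ENNReal Classical

/-- `nStep P n i j` is the `n`-step transition probability of the Markov chain with
one-step transition matrix `P`. -/
noncomputable def nStep {S : Type*} (P : S → S → ℝ) : ℕ → S → S → ℝ
  | 0, i, j => if i = j then 1 else 0
  | n + 1, i, j => ∑' k : S, P i k * nStep P n k j

/-- `avoidProb P V n i` is the probability that the Markov chain with transition
matrix `P` started at `i` avoids the set `V` at all times `1, …, n`,
i.e. `ℙ_i(τ_V > n)` where `τ_V = inf {n ≥ 1 : Z_n ∈ V}` is the first hitting
time of `V`. -/
noncomputable def avoidProb {S : Type*} (P : S → S → ℝ) (V : Set S) : ℕ → S → ℝ≥0∞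
  | 0, _ => 1
  | n + 1, i =>
      ∑' j : S, Set.indicator Vᶜ (fun j => ENNReal.ofReal (P i j) * avoidProb P V n j) j

/-- The expected first hitting time `E_i[τ_V] = ∑_{n ≥ 0} ℙ_i(τ_V > n)` of the set `V`
by the Markov chain with transition matrix `P` started at `i`. -/
noncomputable def expHittingTime {S : Type*} (P : S → S → ℝ) (V : Set S) (i : S) : ℝ≥0∞ :=
  ∑' n : ℕ, avoidProb P V n i

set_option linter.unusedSectionVars false

section Aux
variable {S : Type*} [Countable S] (P : S → S → ℝ)

lemma nStep_nonneg (hP0 : ∀ i j, 0 ≤ P i j) : ∀ n i j, 0 ≤ nStep P n i j := by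
  intro n
  induction n with
  | zero => intro i j; simp only [nStep]; positivity
  | succ n ih =>
    intro i j
    simp only [nStep]
    exact tsum_nonneg fun k => mul_nonneg (hP0 i k) (ih k j)

lemma summable_mul_nStep (hP0 : ∀ i j, 0 ≤ P i j) (hP1 : ∀ i, HasSum (P i) 1)
    (hle : ∀ k j, nStep P n k j ≤ 1) (i j : S) :
    Summable fun k => P i k * nStep P n k j :=
  (hP1 i).summable.of_nonneg_of_le
    (fun k => mul_nonneg (hP0 i k) (nStep_nonneg P hP0 n k j))
    (fun k => by
      calc P i k * nStep P n k j ≤ P i k * 1 :=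
            mul_le_mul_of_nonneg_left (hle k j) (hP0 i k)
        _ = P i k := mul_one _)

lemma nStep_le_one (hP0 : ∀ i j, 0 ≤ P i j) (hP1 : ∀ i, HasSum (P i) 1) :
    ∀ n i j, nStep P n i j ≤ 1 := by
  intro n
  induction n with
  | zero => intro i j; simp only [nStep]; split <;> norm_num
  | succ n ih =>
    intro i j
    simp only [nStep]
    calc ∑' k, P i k * nStep P n k j ≤ ∑' k, P i k := by
          refine Summable.tsum_le_tsum (fun k => ?_) (summable_mul_nStep P hP0 hP1 ih i j)
            (hP1 i).summable
          calc P i k * nStep P n k j ≤ P i k * 1 :=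
                mul_le_mul_of_nonneg_left (ih k j) (hP0 i k)
            _ = P i k := mul_one _
      _ = 1 := (hP1 i).tsum_eq

lemma summable_nStep_mul (hP0 : ∀ i j, 0 ≤ P i j) (hP1 : ∀ i, HasSum (P i) 1) (n : ℕ)
    (i j : S) : Summable fun k => P i k * nStep P n k j :=
  summable_mul_nStep P hP0 hP1 (fun k j => nStep_le_one P hP0 hP1 n k j) i j

lemma eStep_succ (hP0 : ∀ i j, 0 ≤ P i j) (hP1 : ∀ i, HasSum (P i) 1) (n : ℕ) (i j : S) :
    ENNReal.ofReal (nStep P (n + 1) i j)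
      = ∑' k, ENNReal.ofReal (P i k) * ENNReal.ofReal (nStep P n k j) := by
  simp only [nStep]
  rw [ENNReal.ofReal_tsum_of_nonneg
    (fun k => mul_nonneg (hP0 i k) (nStep_nonneg P hP0 n k j))
    (summable_nStep_mul P hP0 hP1 n i j)]
  exact tsum_congr fun k => ENNReal.ofReal_mul (hP0 i k)

lemma sum_q1 (hP0 : ∀ i j, 0 ≤ P i j) (hP1 : ∀ i, HasSum (P i) 1) (i : S) :
    ∑' j, ENNReal.ofReal (P i j) = 1 := by
  rw [← ENNReal.ofReal_tsum_of_nonneg (hP0 i) (hP1 i).summable, (hP1 i).tsum_eq,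
    ENNReal.ofReal_one]

lemma sum_eStep (hP0 : ∀ i j, 0 ≤ P i j) (hP1 : ∀ i, HasSum (P i) 1) (n : ℕ) (i : S) :
    ∑' j, ENNReal.ofReal (nStep P n i j) = 1 := by
  induction n generalizing i with
  | zero =>
    simp only [nStep]
    rw [tsum_eq_single i]
    · simp
    · intro j hj; simp [Ne.symm hj]
  | succ n ih =>
    calc ∑' j, ENNReal.ofReal (nStep P (n + 1) i j)
        = ∑' j, ∑' k, ENNReal.ofReal (P i k) * ENNReal.ofReal (nStep P n k j) :=
          tsum_congr fun j => eStep_succ P hP0 hP1 n i j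
      _ = ∑' k, ∑' j, ENNReal.ofReal (P i k) * ENNReal.ofReal (nStep P n k j) :=
          ENNReal.tsum_comm
      _ = ∑' k, ENNReal.ofReal (P i k) * ∑' j, ENNReal.ofReal (nStep P n k j) := by
          simp [ENNReal.tsum_mul_left]
      _ = ∑' k, ENNReal.ofReal (P i k) := by simp [ih]
      _ = 1 := sum_q1 P hP0 hP1 i

lemma summable_nStep (hP0 : ∀ i j, 0 ≤ P i j) (hP1 : ∀ i, HasSum (P i) 1) (n : ℕ) (i : S) :
    Summable (nStep P n i) := by
  have h := ENNReal.summable_toReal (f := fun j => ENNReal.ofReal (nStep P n i j))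
    (by rw [sum_eStep P hP0 hP1 n i]; exact ENNReal.one_ne_top)
  refine h.congr fun j => ?_
  exact ENNReal.toReal_ofReal (nStep_nonneg P hP0 n i j)

lemma tsum_nStep (hP0 : ∀ i j, 0 ≤ P i j) (hP1 : ∀ i, HasSum (P i) 1) (n : ℕ) (i : S) :
    ∑' j, nStep P n i j = 1 := by
  have h := sum_eStep P hP0 hP1 n i
  have : ENNReal.ofReal (∑' j, nStep P n i j) = 1 := by
    rw [ENNReal.ofReal_tsum_of_nonneg (fun j => nStep_nonneg P hP0 n i j)
      (summable_nStep P hP0 hP1 n i), h]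
  have hnn : 0 ≤ ∑' j, nStep P n i j := tsum_nonneg fun j => nStep_nonneg P hP0 n i j
  have := congrArg ENNReal.toReal this
  rwa [ENNReal.toReal_ofReal hnn, ENNReal.toReal_one] at this

end Aux
section Aux2
variable {S : Type*} [Countable S] (P : S → S → ℝ) (V : Set S)

lemma avoidProb_succ (n : ℕ) (i : S) :
    avoidProb P V (n + 1) i
      = ∑' j, Set.indicator Vᶜ (fun j => ENNReal.ofReal (P i j) * avoidProb P V n j) j := rfl

lemma avoidProb_le_one (hP0 : ∀ i j, 0 ≤ P i j) (hP1 : ∀ i, HasSum (P i) 1) :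
    ∀ n i, avoidProb P V n i ≤ 1 := by
  intro n
  induction n with
  | zero => intro i; simp [avoidProb]
  | succ n ih =>
    intro i
    rw [avoidProb_succ]
    calc ∑' j, Set.indicator Vᶜ (fun j => ENNReal.ofReal (P i j) * avoidProb P V n j) j
        ≤ ∑' j, ENNReal.ofReal (P i j) * avoidProb P V n j :=
          ENNReal.tsum_le_tsum fun j => Set.indicator_le_self _ _ j
      _ ≤ ∑' j, ENNReal.ofReal (P i j) :=
          ENNReal.tsum_le_tsum fun j => by
            calc ENNReal.ofReal (P i j) * avoidProb P V n j
                ≤ ENNReal.ofReal (P i j) * 1 := mul_le_mul_right (ih j) _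
              _ = ENNReal.ofReal (P i j) := mul_one _
      _ = 1 := sum_q1 P hP0 hP1 i

lemma avoidProb_antitone (hP0 : ∀ i j, 0 ≤ P i j) (hP1 : ∀ i, HasSum (P i) 1) (i : S) :
    Antitone (fun n => avoidProb P V n i) := by
  have key : ∀ n i, avoidProb P V (n + 1) i ≤ avoidProb P V n i := by
    intro n
    induction n with
    | zero =>
      intro i
      calc avoidProb P V 1 i ≤ 1 := avoidProb_le_one P V hP0 hP1 1 i
        _ = avoidProb P V 0 i := by simp [avoidProb]
    | succ n ih =>
      intro i
      rw [avoidProb_succ, avoidProb_succ]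
      exact ENNReal.tsum_le_tsum fun j =>
        Set.indicator_le_indicator (mul_le_mul_right (ih j) _)
  intro a b hab
  simp only
  induction hab with
  | refl => exact le_rfl
  | step h ih => exact le_trans (key _ i) ih

lemma avoidProb_decomp (hP0 : ∀ i j, 0 ≤ P i j) (hP1 : ∀ i, HasSum (P i) 1)
    (k : ℕ) (hk : 1 ≤ k) (m : ℕ) (i : S) :
    avoidProb P V (k + m) i
      ≤ ∑' j, Set.indicator Vᶜ
          (fun j => ENNReal.ofReal (nStep P k i j) * avoidProb P V m j) j := by
  induction k, hk using Nat.le_induction generalizing i with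
  | base =>
    rw [Nat.add_comm 1 m, avoidProb_succ]
    refine le_of_eq (tsum_congr fun j => ?_)
    have h1 : (fun j => ENNReal.ofReal (nStep P 1 i j) * avoidProb P V m j)
        = fun j => ENNReal.ofReal (P i j) * avoidProb P V m j := by
      funext j
      have : nStep P 1 i j = P i j := by
        simp only [nStep]
        rw [tsum_eq_single j]
        · simp
        · intro k hk; simp [hk]
      rw [this]
    rw [h1]
  | succ k hk ih =>
    have he : k + 1 + m = (k + m) + 1 := by ring
    rw [he, avoidProb_succ]
    calc ∑' j, Set.indicator Vᶜ
            (fun j => ENNReal.ofReal (P i j) * avoidProb P V (k + m) j) j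
        ≤ ∑' j, Set.indicator Vᶜ (fun j => ENNReal.ofReal (P i j) *
            ∑' l, Set.indicator Vᶜ
              (fun l => ENNReal.ofReal (nStep P k j l) * avoidProb P V m l) l) j :=
          ENNReal.tsum_le_tsum fun j =>
            Set.indicator_le_indicator (mul_le_mul_right (ih j) _)
      _ ≤ ∑' j, ENNReal.ofReal (P i j) *
            ∑' l, Set.indicator Vᶜ
              (fun l => ENNReal.ofReal (nStep P k j l) * avoidProb P V m l) l :=
          ENNReal.tsum_le_tsum fun j => Set.indicator_le_self _ _ j
      _ = ∑' j, ∑' l, ENNReal.ofReal (P i j) * Set.indicator Vᶜ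
              (fun l => ENNReal.ofReal (nStep P k j l) * avoidProb P V m l) l :=
          tsum_congr fun j => ENNReal.tsum_mul_left.symm
      _ = ∑' l, ∑' j, ENNReal.ofReal (P i j) * Set.indicator Vᶜ
              (fun l => ENNReal.ofReal (nStep P k j l) * avoidProb P V m l) l :=
          ENNReal.tsum_comm
      _ = ∑' l, Set.indicator Vᶜ
            (fun l => (∑' j, ENNReal.ofReal (P i j) * ENNReal.ofReal (nStep P k j l))
              * avoidProb P V m l) l := by
          refine tsum_congr fun l => ?_
          by_cases hl : l ∈ Vᶜ
          · simp only [Set.indicator_of_mem hl]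
            rw [← ENNReal.tsum_mul_right]
            exact tsum_congr fun j => (mul_assoc _ _ _).symm
          · simp [Set.indicator_of_notMem hl]
      _ = ∑' l, Set.indicator Vᶜ
            (fun l => ENNReal.ofReal (nStep P (k + 1) i l) * avoidProb P V m l) l := by
          refine tsum_congr fun l => ?_
          by_cases hl : l ∈ Vᶜ
          · simp only [Set.indicator_of_mem hl]
            rw [eStep_succ P hP0 hP1 k i l]
          · simp [Set.indicator_of_notMem hl]

end Aux2
/-- Auxiliary iterated taboo expectation used in the proof of Foster's theorem. -/
noncomputable def fosterW {S : Type*} (Q : S → S → ℝ) (V : Set S) (g : S → ℝ) :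
    ℕ → S → ℝ≥0∞
  | 0, i => ENNReal.ofReal (g i)
  | n + 1, i =>
      ∑' j, Set.indicator Vᶜ (fun j => ENNReal.ofReal (Q i j) * fosterW Q V g n j) j

section Foster
variable {S : Type*} [Countable S]

lemma fosterW_succ (Q : S → S → ℝ) (V : Set S) (g : S → ℝ) (n : ℕ) (i : S) :
    fosterW Q V g (n + 1) i
      = ∑' j, Set.indicator Vᶜ (fun j => ENNReal.ofReal (Q i j) * fosterW Q V g n j) j := rfl

lemma foster_onestep (Q : S → S → ℝ)
    (hQ0 : ∀ i j, 0 ≤ Q i j) (hQ1 : ∀ i, HasSum (Q i) 1)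
    (ε : ℝ) (hε : 0 < ε) (V : Set S) (g : S → ℝ) (hg : ∀ i, 0 ≤ g i)
    (hdrift : ∀ i ∉ V, Summable (fun j => Q i j * g j) ∧
      (∑' j : S, Q i j * g j) ≤ g i - ε)
    (hfin : ∀ i ∈ V, Summable (fun j => Q i j * g j)) :
    ∀ i : S, (∑' n : ℕ, avoidProb Q V n i) < ⊤ := by
  set G : S → ℝ≥0∞ := fun j => ENNReal.ofReal (g j) with hG
  set q : S → S → ℝ≥0∞ := fun i j => ENNReal.ofReal (Q i j) with hq
  have hsum_ofReal : ∀ i, Summable (fun j => Q i j * g j) →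
      ∑' j, q i j * G j = ENNReal.ofReal (∑' j, Q i j * g j) := by
    intro i hs
    rw [ENNReal.ofReal_tsum_of_nonneg (fun j => mul_nonneg (hQ0 i j) (hg j)) hs]
    exact tsum_congr fun j => (ENNReal.ofReal_mul (hQ0 i j)).symm
  -- drift in ℝ≥0∞
  have drift' : ∀ i ∉ V, (∑' j, q i j * G j) + ENNReal.ofReal ε ≤ G i := by
    intro i hi
    obtain ⟨hs, hd⟩ := hdrift i hi
    rw [hsum_ofReal i hs, ← ENNReal.ofReal_add (tsum_nonneg fun j => mul_nonneg (hQ0 i j) (hg j)) hε.le]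
    refine ENNReal.ofReal_le_ofReal ?_
    linarith
  -- key supermartingale inequality
  have key : ∀ n, ∀ i ∉ V,
      ENNReal.ofReal ε * avoidProb Q V n i + fosterW Q V g (n + 1) i
        ≤ fosterW Q V g n i := by
    intro n
    induction n with
    | zero =>
      intro i hi
      have h1 : avoidProb Q V 0 i = 1 := rfl
      rw [h1, mul_one, fosterW_succ]
      calc ENNReal.ofReal ε + ∑' j, Set.indicator Vᶜ (fun j => q i j * fosterW Q V g 0 j) j
          ≤ ENNReal.ofReal ε + ∑' j, q i j * G j := by
            refine add_le_add_right (ENNReal.tsum_le_tsum fun j => ?_) _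
            exact le_trans (Set.indicator_le_self _ _ j) le_rfl
        _ = (∑' j, q i j * G j) + ENNReal.ofReal ε := add_comm _ _
        _ ≤ G i := drift' i hi
    | succ n ih =>
      intro i hi
      rw [avoidProb_succ, fosterW_succ, fosterW_succ]
      calc ENNReal.ofReal ε * ∑' j, Set.indicator Vᶜ (fun j => q i j * avoidProb Q V n j) j
            + ∑' j, Set.indicator Vᶜ (fun j => q i j * fosterW Q V g (n + 1) j) j
          = ∑' j, (Set.indicator Vᶜ (fun j => ENNReal.ofReal ε * (q i j * avoidProb Q V n j)) j
              + Set.indicator Vᶜ (fun j => q i j * fosterW Q V g (n + 1) j) j) := by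
            rw [ENNReal.tsum_add, ← ENNReal.tsum_mul_left]
            congr 1
            refine tsum_congr fun j => ?_
            by_cases hj : j ∈ Vᶜ
            · simp [Set.indicator_of_mem hj]
            · simp [Set.indicator_of_notMem hj]
        _ = ∑' j, Set.indicator Vᶜ
              (fun j => q i j * (ENNReal.ofReal ε * avoidProb Q V n j + fosterW Q V g (n + 1) j)) j := by
            refine tsum_congr fun j => ?_
            by_cases hj : j ∈ Vᶜ
            · simp only [Set.indicator_of_mem hj]; ring
            · simp [Set.indicator_of_notMem hj]
        _ ≤ ∑' j, Set.indicator Vᶜ (fun j => q i j * fosterW Q V g n j) j := by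
            refine ENNReal.tsum_le_tsum fun j => ?_
            by_cases hj : j ∈ Vᶜ
            · simp only [Set.indicator_of_mem hj]
              exact mul_le_mul_right (ih j hj) _
            · simp [Set.indicator_of_notMem hj]
  -- hpartial sums
  have hpartial : ∀ N, ∀ i ∉ V,
      ENNReal.ofReal ε * (∑ n ∈ Finset.range N, avoidProb Q V n i) + fosterW Q V g N i
        ≤ G i := by
    intro N
    induction N with
    | zero => intro i hi; simp [fosterW]; exact le_rfl
    | succ N ih =>
      intro i hi
      rw [Finset.sum_range_succ, mul_add]
      calc ENNReal.ofReal ε * ∑ n ∈ Finset.range N, avoidProb Q V n i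
            + ENNReal.ofReal ε * avoidProb Q V N i + fosterW Q V g (N + 1) i
          = ENNReal.ofReal ε * ∑ n ∈ Finset.range N, avoidProb Q V n i
            + (ENNReal.ofReal ε * avoidProb Q V N i + fosterW Q V g (N + 1) i) := by ring
        _ ≤ ENNReal.ofReal ε * ∑ n ∈ Finset.range N, avoidProb Q V n i
            + fosterW Q V g N i := add_le_add_right (key N i hi) _
        _ ≤ G i := ih i hi
  have hεne : ENNReal.ofReal ε ≠ 0 := by
    simp [ENNReal.ofReal_eq_zero, not_le, hε]
  have hεnetop : ENNReal.ofReal ε ≠ ⊤ := ENNReal.ofReal_ne_top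
  have bound1 : ∀ i ∉ V, (∑' n : ℕ, avoidProb Q V n i) ≤ G i / ENNReal.ofReal ε := by
    intro i hi
    rw [ENNReal.tsum_eq_iSup_nat]
    refine iSup_le fun N => ?_
    rw [ENNReal.le_div_iff_mul_le (Or.inl hεne) (Or.inl hεnetop)]
    rw [mul_comm]
    calc ENNReal.ofReal ε * ∑ n ∈ Finset.range N, avoidProb Q V n i
        ≤ ENNReal.ofReal ε * ∑ n ∈ Finset.range N, avoidProb Q V n i + fosterW Q V g N i :=
          le_add_right le_rfl
      _ ≤ G i := hpartial N i hi
  intro i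
  by_cases hi : i ∈ V
  · -- start in V: one step then use bound1
    have hstep : ∑' n : ℕ, avoidProb Q V n i
        = 1 + ∑' n : ℕ, avoidProb Q V (n + 1) i := by
      rw [tsum_eq_zero_add' ENNReal.summable]; rfl
    have h2 : ∑' n : ℕ, avoidProb Q V (n + 1) i
        ≤ (∑' j, q i j * G j) / ENNReal.ofReal ε := by
      calc ∑' n : ℕ, avoidProb Q V (n + 1) i
          = ∑' j, ∑' n : ℕ, Set.indicator Vᶜ (fun j => q i j * avoidProb Q V n j) j := by
            rw [ENNReal.tsum_comm]
            exact tsum_congr fun n => avoidProb_succ Q V n i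
        _ = ∑' j, Set.indicator Vᶜ (fun j => q i j * ∑' n : ℕ, avoidProb Q V n j) j := by
            refine tsum_congr fun j => ?_
            by_cases hj : j ∈ Vᶜ
            · simp only [Set.indicator_of_mem hj]
              exact ENNReal.tsum_mul_left
            · simp [Set.indicator_of_notMem hj]
        _ ≤ ∑' j, q i j * (G j / ENNReal.ofReal ε) := by
            refine ENNReal.tsum_le_tsum fun j => ?_
            by_cases hj : j ∈ Vᶜ
            · simp only [Set.indicator_of_mem hj]
              exact mul_le_mul_right (bound1 j hj) _
            · simp [Set.indicator_of_notMem hj]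
        _ = (∑' j, q i j * G j) / ENNReal.ofReal ε := by
            simp only [div_eq_mul_inv, ← mul_assoc]
            exact ENNReal.tsum_mul_right
    have hfinsum : (∑' j, q i j * G j) < ⊤ := by
      rw [hsum_ofReal i (hfin i hi)]
      exact ENNReal.ofReal_lt_top
    rw [hstep]
    calc (1 : ℝ≥0∞) + ∑' n : ℕ, avoidProb Q V (n + 1) i
        ≤ 1 + (∑' j, q i j * G j) / ENNReal.ofReal ε := add_le_add_right h2 _
      _ < ⊤ := by
        refine ENNReal.add_lt_top.mpr ⟨ENNReal.one_lt_top, ?_⟩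
        exact ENNReal.div_lt_top hfinsum.ne hεne
  · exact lt_of_le_of_lt (bound1 i hi)
      (ENNReal.div_lt_top ENNReal.ofReal_ne_top hεne)

end Foster

/-- **Foster's theorem for an embedded chain.** Let `P` be a transition matrix on a
countable set `S`, and `τ : S → ℕ` a step-size function taking finitely many values,
all positive and bounded by `Tmax`.  The embedded chain `Z̃_n = Z_{t_n}`
(where `t_0 = 0`, `t_{n+1} = t_n + τ(Z_{t_n})`) is a Markov chain whose transition
matrix is `i j ↦ nStep P (τ i) i j`, so that
`E(f(Z̃_{n+1}) | Z̃_n = i) = ∑_j nStep P (τ i) i j * f j`.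
If there are `ε > 0`, a finite `V ⊆ S` and `f : S → ℝ` bounded below with
drift at most `-ε` outside `V` for the embedded chain and finite one-step
expectation on `V`, then the expected first hitting time of `V` by the original
chain is finite from every initial state. -/
theorem foster_embedded {S : Type*} [Countable S]
    (P : S → S → ℝ)
    (hP0 : ∀ i j, 0 ≤ P i j)
    (hP1 : ∀ i, HasSum (P i) 1)
    (τ : S → ℕ) (Tmax : ℕ)
    (hτpos : ∀ i, 0 < τ i)
    (hτbd : ∀ i, τ i ≤ Tmax)
    (hτfin : (Set.range τ).Finite)
    (ε : ℝ) (hε : 0 < ε)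
    (V : Set S) (hV : V.Finite)
    (f : S → ℝ) (m : ℝ) (hfm : ∀ i, m ≤ f i)
    (hdrift : ∀ i ∉ V, Summable (fun j => nStep P (τ i) i j * f j) ∧
      (∑' j : S, nStep P (τ i) i j * f j) ≤ f i - ε)
    (hfin : ∀ i ∈ V, Summable (fun j => nStep P (τ i) i j * f j)) :
    ∀ i : S, expHittingTime P V i < ⊤ := by
  intro i₀
  have hT1 : 1 ≤ Tmax := le_trans (hτpos i₀) (hτbd i₀)
  set Q : S → S → ℝ := fun i j => nStep P (τ i) i j with hQdef
  have hQ0 : ∀ i j, 0 ≤ Q i j := fun i j => nStep_nonneg P hP0 _ i j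
  have hQ1 : ∀ i, HasSum (Q i) 1 := fun i => by
    have h := (summable_nStep P hP0 hP1 (τ i) i).hasSum
    rwa [tsum_nStep P hP0 hP1] at h
  set g : S → ℝ := fun j => f j - m with hgdef
  have hg : ∀ j, 0 ≤ g j := fun j => sub_nonneg.mpr (hfm j)
  have hsummg : ∀ i, Summable (fun j => Q i j * f j) → Summable (fun j => Q i j * g j) := by
    intro i hs
    have he : (fun j => Q i j * g j) = fun j => Q i j * f j - Q i j * m :=
      funext fun j => by simp only [hgdef]; ring
    rw [he]
    exact hs.sub ((hQ1 i).summable.mul_right m)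
  have htsumg : ∀ i, Summable (fun j => Q i j * f j) →
      ∑' j, Q i j * g j = (∑' j, Q i j * f j) - m := by
    intro i hs
    have he : (fun j => Q i j * g j) = fun j => Q i j * f j - Q i j * m :=
      funext fun j => by simp only [hgdef]; ring
    rw [he, Summable.tsum_sub hs ((hQ1 i).summable.mul_right m), tsum_mul_right, (hQ1 i).tsum_eq,
      one_mul]
  have hdrift' : ∀ i ∉ V, Summable (fun j => Q i j * g j) ∧
      (∑' j : S, Q i j * g j) ≤ g i - ε := by
    intro i hi
    obtain ⟨hs, hd⟩ := hdrift i hi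
    refine ⟨hsummg i hs, ?_⟩
    rw [htsumg i hs]
    simp only [hgdef]
    linarith
  have hfin' : ∀ i ∈ V, Summable fun j => Q i j * g j := fun i hi => hsummg i (hfin i hi)
  have hB := foster_onestep Q hQ0 hQ1 ε hε V g hg hdrift' hfin'
  have bridge : ∀ n i, avoidProb P V (Tmax * n) i ≤ avoidProb Q V n i := by
    intro n
    induction n with
    | zero => intro i; rw [Nat.mul_zero]; exact le_rfl
    | succ n ih =>
      intro i
      have h1 : avoidProb P V (Tmax * (n + 1)) i ≤ avoidProb P V (τ i + Tmax * n) i := by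
        refine avoidProb_antitone P V hP0 hP1 i ?_
        calc τ i + Tmax * n ≤ Tmax + Tmax * n := add_le_add_left (hτbd i) _
          _ = Tmax * (n + 1) := by ring
      refine le_trans h1 (le_trans
        (avoidProb_decomp P V hP0 hP1 (τ i) (hτpos i) (Tmax * n) i) ?_)
      rw [avoidProb_succ]
      exact ENNReal.tsum_le_tsum fun j =>
        Set.indicator_le_indicator (mul_le_mul_right (ih j) _)
  haveI : NeZero Tmax := ⟨by omega⟩
  calc expHittingTime P V i₀ = ∑' n : ℕ, avoidProb P V n i₀ := rfl
    _ = ∑' p : ℕ × Fin Tmax, avoidProb P V ((Nat.divModEquiv Tmax).symm p) i₀ :=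
        ((Nat.divModEquiv Tmax).symm.tsum_eq (fun n => avoidProb P V n i₀)).symm
    _ ≤ ∑' p : ℕ × Fin Tmax, avoidProb P V (Tmax * p.1) i₀ := by
        refine ENNReal.tsum_le_tsum fun p => ?_
        refine avoidProb_antitone P V hP0 hP1 i₀ ?_
        have : (Nat.divModEquiv Tmax).symm p = p.1 * Tmax + (p.2 : ℕ) := by
          simp [Nat.divModEquiv]
        rw [this]
        calc Tmax * p.1 = p.1 * Tmax := Nat.mul_comm _ _
          _ ≤ p.1 * Tmax + (p.2 : ℕ) := Nat.le_add_right _ _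
    _ = ∑' m' : ℕ, ∑' _ : Fin Tmax, avoidProb P V (Tmax * m') i₀ := ENNReal.tsum_prod (f := fun m' _ => avoidProb P V (Tmax * m') i₀)
    _ = ∑' m' : ℕ, (Tmax : ℝ≥0∞) * avoidProb P V (Tmax * m') i₀ :=
        tsum_congr fun m' => by simp [tsum_fintype, Finset.sum_const, nsmul_eq_mul]
    _ = (Tmax : ℝ≥0∞) * ∑' m' : ℕ, avoidProb P V (Tmax * m') i₀ := ENNReal.tsum_mul_left
    _ ≤ (Tmax : ℝ≥0∞) * ∑' m' : ℕ, avoidProb Q V m' i₀ :=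
        mul_le_mul_right (ENNReal.tsum_le_tsum fun m' => bridge m' i₀) _
    _ < ⊤ := ENNReal.mul_lt_top (ENNReal.natCast_lt_top Tmax) (hB i₀)
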